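/- arXiv:2207.12874 — 2 statements merged into one kernel-verified Lean document; each statement's English description precedes it below -/
import Mathlib

section
/- For every C > 1 there exists n_C such that every C-bipartite-Ramsey graph G = (V1, V2, E) with |V1|, |V2| ≥ n_C contains at least 2|V1|/3 vertices in V1 whose degrees lie between |V2|/(32C) and (1 − 1/(32C))|V2|. -/
open Finset

def BipRamsey {V1 V2 : Type} [Fintype V1] [Fintype V2] (E : V1 → V2 → Prop) (C : ℝ) : Prop :=
  ∀ (A : Finset V1) (B : Finset V2),
    C * Real.logb 2 (Fintype.card V1) ≤ A.card →
    C * Real.logb 2 (Fintype.card V2) ≤ B.card →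
    ¬ ((∀ a ∈ A, ∀ b ∈ B, E a b) ∨ (∀ a ∈ A, ∀ b ∈ B, ¬ E a b))

/-- Neighbourhood of `u ∈ V1` in `V2`. -/
def nbr {V1 V2 : Type} [Fintype V2] (E : V1 → V2 → Prop) [∀ a b, Decidable (E a b)]
    (u : V1) : Finset V2 := Finset.univ.filter (fun v => E u v)

lemma exp_two_bound {x : ℝ} (h0 : 0 ≤ x) (h2 : x ≤ 1/2) : Real.exp (-(2*x)) ≤ 1 - x := by
  have h1 : 2*x + 1 ≤ Real.exp (2*x) := Real.add_one_le_exp _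
  have h3 : (0:ℝ) < Real.exp (-(2*x)) := Real.exp_pos _
  have h4 : Real.exp (-(2*x)) * Real.exp (2*x) = 1 := by
    rw [← Real.exp_add]; simp
  nlinarith

lemma exp_pow_bound {x : ℝ} (h0 : 0 ≤ x) (h2 : x ≤ 1/2) (t : ℕ) :
    Real.exp (-(2*x*t)) ≤ (1-x)^t := by
  have h : Real.exp (-(2*x*t)) = Real.exp (-(2*x)) ^ t := by
    rw [← Real.exp_nat_mul]; ring_nf
  rw [h]
  exact pow_le_pow_left₀ (Real.exp_pos _).le (exp_two_bound h0 h2) t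

lemma choose_ratio {f m t : ℕ} (htf : t ≤ f) (hfm : f ≤ m) :
    (m.choose t : ℝ) * (((f : ℝ) - t) / m) ^ t ≤ (f.choose t : ℝ) := by
  rcases Nat.eq_zero_or_pos m with hm | hm
  · have hf : f = 0 := by omega
    have ht : t = 0 := by omega
    subst hf; subst ht; norm_num
  have hmR : (0:ℝ) < m := by exact_mod_cast hm
  have hft : (t:ℝ) ≤ f := by exact_mod_cast htf
  have hfm' : (f:ℝ) ≤ m := by exact_mod_cast hfm
  have hq : (0:ℝ) ≤ ((f:ℝ)-t)/m := div_nonneg (by linarith) hmR.le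
  have key : ∀ (n : ℕ), t ≤ n → (n.descFactorial t : ℝ) = ∏ i ∈ Finset.range t, ((n : ℝ) - i) := by
    intro n hn
    rw [Nat.descFactorial_eq_prod_range, Nat.cast_prod]
    exact Finset.prod_congr rfl fun i hi =>
      Nat.cast_sub ((Finset.mem_range.mp hi).le.trans hn)
  have hd : (m.descFactorial t : ℝ) * (((f:ℝ) - t)/m)^t ≤ (f.descFactorial t : ℝ) := by
    rw [key m (htf.trans hfm), key f htf]
    have hc : (((f:ℝ) - t)/m)^t = ∏ _i ∈ Finset.range t, (((f:ℝ)-t)/m) := by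
      rw [Finset.prod_const, Finset.card_range]
    rw [hc, ← Finset.prod_mul_distrib]
    apply Finset.prod_le_prod
    · intro i hi
      have hi' : (i:ℝ) ≤ m := by
        exact_mod_cast ((Finset.mem_range.mp hi).le.trans (htf.trans hfm))
      exact mul_nonneg (by linarith) hq
    · intro i hi
      have hi' : (i:ℝ) + 1 ≤ (t:ℝ) := by exact_mod_cast Finset.mem_range.mp hi
      have hiR : (0:ℝ) ≤ i := Nat.cast_nonneg i
      rw [mul_div_assoc', div_le_iff₀ hmR]
      nlinarith
  have e1 : (m.descFactorial t : ℝ) = (t.factorial : ℝ) * m.choose t := by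
    exact_mod_cast congrArg Nat.cast (Nat.descFactorial_eq_factorial_mul_choose m t)
  have e2 : (f.descFactorial t : ℝ) = (t.factorial : ℝ) * f.choose t := by
    exact_mod_cast congrArg Nat.cast (Nat.descFactorial_eq_factorial_mul_choose f t)
  have hfp : (0:ℝ) < (t.factorial : ℝ) := by exact_mod_cast t.factorial_pos
  rw [e1, e2] at hd
  rw [mul_assoc] at hd
  exact (mul_le_mul_iff_right₀ hfp).mp hd

lemma double_count {α β : Type*} (X : Finset α) (Y : Finset β) (R : α → β → Prop)
    [∀ a b, Decidable (R a b)] (t : ℕ) :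
    ∑ A ∈ X.powersetCard t, (Y.filter (fun y => ∀ a ∈ A, R a y)).card
      = ∑ y ∈ Y, ((X.filter (fun x => R x y)).card.choose t) := by
  have h1 : ∀ A ∈ X.powersetCard t, (Y.filter (fun y => ∀ a ∈ A, R a y)).card
      = ∑ y ∈ Y, if ∀ a ∈ A, R a y then 1 else 0 := fun A _ => Finset.card_filter _ _
  rw [Finset.sum_congr rfl h1, Finset.sum_comm]
  refine Finset.sum_congr rfl fun y _ => ?_
  rw [← Finset.card_filter]
  have h2 : (X.powersetCard t).filter (fun A => ∀ a ∈ A, R a y)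
      = (X.filter (fun x => R x y)).powersetCard t := by
    ext A
    simp only [Finset.mem_filter, Finset.mem_powersetCard, Finset.subset_iff, Finset.mem_filter]
    constructor
    · rintro ⟨⟨hAX, hAc⟩, hR⟩
      exact ⟨fun x hx => ⟨hAX hx, hR x hx⟩, hAc⟩
    · rintro ⟨hsub, hAc⟩
      exact ⟨⟨fun x hx => (hsub hx).1, hAc⟩, fun x hx => (hsub hx).2⟩
  rw [h2, Finset.card_powersetCard]

lemma exists_A {α β : Type*} (X : Finset α) (Y : Finset β) (R : α → β → Prop)
    [∀ a b, Decidable (R a b)] (t : ℕ) (ht : t ≤ X.card) :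
    ∃ A, A ⊆ X ∧ A.card = t ∧
      ∑ y ∈ Y, ((X.filter (fun x => R x y)).card.choose t)
        ≤ (Y.filter (fun y => ∀ a ∈ A, R a y)).card * X.card.choose t := by
  have hP : (X.powersetCard t).Nonempty := by
    rw [← Finset.card_pos, Finset.card_powersetCard]; exact Nat.choose_pos ht
  have heq : ∑ _A ∈ X.powersetCard t, (∑ y ∈ Y, ((X.filter (fun x => R x y)).card.choose t))
      = ∑ A ∈ X.powersetCard t,
          (Y.filter (fun y => ∀ a ∈ A, R a y)).card * (X.powersetCard t).card := by
    rw [← Finset.sum_mul, double_count X Y R t, Finset.sum_const, smul_eq_mul, mul_comm]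
  obtain ⟨A, hA, hle⟩ := Finset.exists_le_of_sum_le hP heq.le
  rw [Finset.card_powersetCard] at hle
  rw [Finset.mem_powersetCard] at hA
  exact ⟨A, hA.1, hA.2, hle⟩

lemma exists_subsets {α β : Type*} (X : Finset α) (Y : Finset β) (R : α → β → Prop)
    [∀ a b, Decidable (R a b)] (t : ℕ) (ht : 0 < t) (θ : ℝ) (hθ1 : θ ≤ 1)
    (htX : (t : ℝ) ≤ θ * X.card)
    (hfib : ∀ y ∈ Y, θ * X.card ≤ ((X.filter (fun x => R x y)).card : ℝ)) :
    ∃ A B, A ⊆ X ∧ A.card = t ∧ B ⊆ Y ∧ (∀ a ∈ A, ∀ b ∈ B, R a b) ∧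
      (Y.card : ℝ) * (θ - t / X.card) ^ t ≤ (B.card : ℝ) := by
  have ht1 : (1:ℝ) ≤ (t:ℝ) := Nat.one_le_cast.mpr ht
  have hX0 : (0:ℝ) < X.card := by nlinarith [(Nat.cast_nonneg X.card : (0:ℝ) ≤ X.card)]
  have htX' : (t:ℝ) ≤ X.card := le_trans htX (by nlinarith)
  have tX : t ≤ X.card := by exact_mod_cast htX'
  obtain ⟨A, hAX, hAcard, hbound⟩ := exists_A X Y R t tX
  refine ⟨A, Y.filter (fun y => ∀ a ∈ A, R a y), hAX, hAcard, Finset.filter_subset _ _,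
    fun a ha b hb => (Finset.mem_filter.mp hb).2 a ha, ?_⟩
  have hθ0 : 0 ≤ θ - (t:ℝ) / X.card := by
    rw [sub_nonneg, div_le_iff₀ hX0]; linarith [htX]
  have hchoose : (0:ℝ) < (X.card.choose t : ℝ) := by exact_mod_cast Nat.choose_pos tX
  have hper : ∀ y ∈ Y, (θ - (t:ℝ) / X.card) ^ t * (X.card.choose t : ℝ)
      ≤ (((X.filter (fun x => R x y)).card.choose t : ℕ) : ℝ) := by
    intro y hy
    set f := (X.filter (fun x => R x y)).card with hf
    have hfib' := hfib y hy
    have htf : t ≤ f := by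
      have : (t:ℝ) ≤ f := le_trans htX hfib'
      exact_mod_cast this
    have hfm : f ≤ X.card := Finset.card_filter_le _ _
    have h1 : (θ - (t:ℝ) / X.card) ≤ ((f:ℝ) - t) / X.card := by
      rw [sub_div]
      have : θ ≤ (f:ℝ) / X.card := by
        rw [le_div_iff₀ hX0]; linarith [hfib']
      linarith
    calc (θ - (t:ℝ) / X.card) ^ t * (X.card.choose t : ℝ)
        ≤ (((f:ℝ) - t) / X.card) ^ t * (X.card.choose t : ℝ) := by
          exact mul_le_mul_of_nonneg_right (pow_le_pow_left₀ hθ0 h1 t) hchoose.le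
      _ ≤ (f.choose t : ℝ) := by rw [mul_comm]; exact choose_ratio htf hfm
  have hsum : (Y.card : ℝ) * ((θ - (t:ℝ) / X.card) ^ t * (X.card.choose t : ℝ))
      ≤ ((Y.filter (fun y => ∀ a ∈ A, R a y)).card : ℝ) * (X.card.choose t : ℝ) := by
    calc (Y.card : ℝ) * ((θ - (t:ℝ) / X.card) ^ t * (X.card.choose t : ℝ))
        = ∑ _y ∈ Y, (θ - (t:ℝ) / X.card) ^ t * (X.card.choose t : ℝ) := by
          rw [Finset.sum_const, nsmul_eq_mul]
      _ ≤ ∑ y ∈ Y, (((X.filter (fun x => R x y)).card.choose t : ℕ) : ℝ) :=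
          Finset.sum_le_sum hper
      _ ≤ ((Y.filter (fun y => ∀ a ∈ A, R a y)).card : ℝ) * (X.card.choose t : ℝ) := by
          rw [← Nat.cast_sum]
          exact_mod_cast hbound
  rw [← mul_assoc] at hsum
  exact le_of_mul_le_mul_right hsum hchoose

def Cond (C : ℝ) (n : ℕ) : Prop :=
  2 ≤ n ∧ 96 * C * (⌈C * Real.logb 2 n⌉₊ : ℝ) ≤ (n:ℝ) ∧
  C * Real.logb 2 n ≤ ((n:ℝ)/6) * Real.exp (-(Real.logb 2 n)/8 - 1/8) ∧
  C * Real.logb 2 n ≤ ((n:ℝ)/2) * Real.exp (-(Real.logb 2 n)/4 - 1/4)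

lemma eventually_main (C : ℝ) (hC : 1 < C) (k c : ℝ) (hk : 2 ≤ k) (hc : 0 < c) :
    ∀ᶠ x : ℝ in Filter.atTop, C * Real.logb 2 x ≤ c * x * Real.exp (-(Real.logb 2 x)/k) := by
  have hlog2 : (0:ℝ) < Real.log 2 := Real.log_pos one_lt_two
  set β : ℝ := 1 / (k * Real.log 2) with hβ
  have hβ0 : 0 < β := by positivity
  have hβ1 : β < 1 := by
    rw [hβ, div_lt_one (by positivity)]
    nlinarith [Real.log_two_gt_d9]
  have hr : (0:ℝ) < 1 - β := by linarith
  have hb := (isLittleO_log_rpow_atTop hr).bound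
    (show 0 < c * Real.log 2 / C by positivity)
  filter_upwards [hb, Filter.eventually_ge_atTop (1:ℝ)] with x hx hx1
  have hx0 : (0:ℝ) < x := by linarith
  have hlx : 0 ≤ Real.log x := Real.log_nonneg hx1
  rw [Real.norm_eq_abs, Real.norm_eq_abs, abs_of_nonneg hlx,
    abs_of_nonneg (Real.rpow_nonneg hx0.le _)] at hx
  have hrw : x ^ (1 - β) = x * Real.exp (-(Real.logb 2 x)/k) := by
    rw [Real.rpow_def_of_pos hx0]
    have h1 : Real.log x * (1 - β) = Real.log x + (-(Real.logb 2 x)/k) := by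
      rw [Real.logb, hβ]
      field_simp
      ring
    rw [h1, Real.exp_add, Real.exp_log hx0]
  have heq : C * Real.logb 2 x = (C / Real.log 2) * Real.log x := by
    rw [Real.logb]; ring
  calc C * Real.logb 2 x = (C / Real.log 2) * Real.log x := heq
    _ ≤ (C / Real.log 2) * (c * Real.log 2 / C * x ^ (1-β)) := by
        apply mul_le_mul_of_nonneg_left hx (by positivity)
    _ = c * x ^ (1-β) := by field_simp
    _ = c * x * Real.exp (-(Real.logb 2 x)/k) := by rw [hrw]; ring

lemma cond_eventually (C : ℝ) (hC : 1 < C) : ∃ N : ℕ, ∀ n ≥ N, Cond C n := by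
  have hC0 : (0:ℝ) < C := by linarith
  have hlog2 : (0:ℝ) < Real.log 2 := Real.log_pos one_lt_two
  -- condition (b)
  have hb0 : ∀ᶠ x : ℝ in Filter.atTop, 96 * C * (C * Real.logb 2 x + 1) ≤ x := by
    have hb := Real.isLittleO_log_id_atTop.bound
      (show 0 < Real.log 2 / (192 * C * C) by positivity)
    filter_upwards [hb, Filter.eventually_ge_atTop (1:ℝ),
      Filter.eventually_ge_atTop (192 * C)] with x hx hx1 hx2
    have hx0 : (0:ℝ) < x := by linarith
    have hlx : 0 ≤ Real.log x := Real.log_nonneg hx1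
    simp only [Real.norm_eq_abs, id_eq] at hx
    rw [abs_of_nonneg hlx, abs_of_nonneg hx0.le] at hx
    have h1 : 96 * C * (C * Real.logb 2 x) ≤ x / 2 := by
      rw [Real.logb]
      have h2 := mul_le_mul_of_nonneg_left hx
        (by positivity : (0:ℝ) ≤ 96 * C * C / Real.log 2)
      calc 96 * C * (C * (Real.log x / Real.log 2))
          = 96 * C * C / Real.log 2 * Real.log x := by ring
        _ ≤ 96 * C * C / Real.log 2 * (Real.log 2 / (192 * C * C) * x) := h2
        _ = x / 2 := by field_simp; ring
    nlinarith
  have hev : ∀ᶠ x : ℝ in Filter.atTop,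
      (96 * C * (C * Real.logb 2 x + 1) ≤ x ∧ 1 ≤ x) ∧
      C * Real.logb 2 x ≤ (x/6) * Real.exp (-(Real.logb 2 x)/8 - 1/8) ∧
      C * Real.logb 2 x ≤ (x/2) * Real.exp (-(Real.logb 2 x)/4 - 1/4) := by
    have h8 := eventually_main C hC 8 (Real.exp (-(1:ℝ)/8) / 6) (by norm_num) (by positivity)
    have h4 := eventually_main C hC 4 (Real.exp (-(1:ℝ)/4) / 2) (by norm_num) (by positivity)
    filter_upwards [hb0, Filter.eventually_ge_atTop (1:ℝ), h8, h4] with x h1 h2 h3 h5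
    refine ⟨⟨h1, h2⟩, ?_, ?_⟩
    · calc C * Real.logb 2 x ≤ Real.exp (-(1:ℝ)/8) / 6 * x * Real.exp (-(Real.logb 2 x)/8) := h3
        _ = (x/6) * Real.exp (-(Real.logb 2 x)/8 - 1/8) := by
            rw [show -Real.logb 2 x / 8 - 1/8 = (-(1:ℝ)/8) + (-Real.logb 2 x/8) by ring,
              Real.exp_add]
            ring
    · calc C * Real.logb 2 x ≤ Real.exp (-(1:ℝ)/4) / 2 * x * Real.exp (-(Real.logb 2 x)/4) := h5
        _ = (x/2) * Real.exp (-(Real.logb 2 x)/4 - 1/4) := by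
            rw [show -Real.logb 2 x / 4 - 1/4 = (-(1:ℝ)/4) + (-Real.logb 2 x/4) by ring,
              Real.exp_add]
            ring
  have hevN : ∀ᶠ n : ℕ in Filter.atTop,
      (96 * C * (C * Real.logb 2 (n:ℝ) + 1) ≤ (n:ℝ) ∧ 1 ≤ (n:ℝ)) ∧
      C * Real.logb 2 (n:ℝ) ≤ ((n:ℝ)/6) * Real.exp (-(Real.logb 2 (n:ℝ))/8 - 1/8) ∧
      C * Real.logb 2 (n:ℝ) ≤ ((n:ℝ)/2) * Real.exp (-(Real.logb 2 (n:ℝ))/4 - 1/4) :=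
    tendsto_natCast_atTop_atTop.eventually hev
  obtain ⟨N, hN⟩ := Filter.eventually_atTop.mp hevN
  refine ⟨max N 2, fun n hn => ?_⟩
  have hn2 : 2 ≤ n := le_trans (le_max_right N 2) hn
  obtain ⟨⟨h1, h1'⟩, h2, h3⟩ := hN n (le_trans (le_max_left N 2) hn)
  refine ⟨hn2, ?_, h2, h3⟩
  have hL : 0 ≤ C * Real.logb 2 (n:ℝ) := by
    have : 0 ≤ Real.logb 2 (n:ℝ) := Real.logb_nonneg one_lt_two h1'
    positivity
  have hceil : (⌈C * Real.logb 2 (n:ℝ)⌉₊ : ℝ) ≤ C * Real.logb 2 (n:ℝ) + 1 :=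
    (Nat.ceil_lt_add_one hL).le
  nlinarith

lemma base_pow_ge {x b : ℝ} (h0 : 0 ≤ x) (h2 : x ≤ 1/2) (t : ℕ) (hb : 1 - x ≤ b) :
    Real.exp (-(2*x*t)) ≤ b^t :=
  le_trans (exp_pow_bound h0 h2 t) (pow_le_pow_left₀ (by linarith) hb t)

set_option maxHeartbeats 2000000 in
lemma core {V1 V2 : Type} [Fintype V1] [Fintype V2] (C : ℝ) (hC : 1 < C)
    (R : V1 → V2 → Prop) [∀ a b, Decidable (R a b)]
    (hc1 : Cond C (Fintype.card V1)) (hc2 : Cond C (Fintype.card V2))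
    (S : Finset V1) (hS : (Fintype.card V1 : ℝ)/6 ≤ S.card)
    (hdeg : ∀ x ∈ S, (1 - 1/(32*C)) * (Fintype.card V2 : ℝ)
      ≤ ((univ.filter (fun y => R x y)).card : ℝ)) :
    ∃ (A : Finset V1) (B : Finset V2),
      C * Real.logb 2 (Fintype.card V1) ≤ A.card ∧
      C * Real.logb 2 (Fintype.card V2) ≤ B.card ∧
      ∀ a ∈ A, ∀ b ∈ B, R a b := by
  classical
  have hC0 : (0:ℝ) < C := by linarith
  obtain ⟨hn1two, hb1, he1, -⟩ := hc1
  obtain ⟨hn2two, hb2, -, hd2⟩ := hc2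
  set n1 := Fintype.card V1 with hn1
  set n2 := Fintype.card V2 with hn2
  set L1 := Real.logb 2 (n1:ℝ) with hL1
  set L2 := Real.logb 2 (n2:ℝ) with hL2
  have hn1R : (2:ℝ) ≤ n1 := by exact_mod_cast hn1two
  have hn2R : (2:ℝ) ≤ n2 := by exact_mod_cast hn2two
  have hL1one : 1 ≤ L1 := by
    rw [hL1, ← Real.logb_self_eq_one (b := 2) one_lt_two]
    exact Real.logb_le_logb_of_le one_lt_two (by norm_num) hn1R
  have hL2one : 1 ≤ L2 := by
    rw [hL2, ← Real.logb_self_eq_one (b := 2) one_lt_two]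
    exact Real.logb_le_logb_of_le one_lt_two (by norm_num) hn2R
  set t1 := ⌈C * L1⌉₊ with ht1
  set t2 := ⌈C * L2⌉₊ with ht2
  have ht1ge : C * L1 ≤ (t1:ℝ) := Nat.le_ceil _
  have ht2ge : C * L2 ≤ (t2:ℝ) := Nat.le_ceil _
  have ht1ub : (t1:ℝ) ≤ C * L1 + 1 := (Nat.ceil_lt_add_one (by nlinarith)).le
  have ht2ub : (t2:ℝ) ≤ C * L2 + 1 := (Nat.ceil_lt_add_one (by nlinarith)).le
  have ht1pos : 0 < t1 := Nat.ceil_pos.mpr (by nlinarith)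
  have ht2pos : 0 < t2 := Nat.ceil_pos.mpr (by nlinarith)
  have hs0 : (0:ℝ) < S.card := by nlinarith
  have h32a : 1/(32*C) ≤ 1/2 := by
    rw [div_le_div_iff₀ (by positivity) (by norm_num)]; nlinarith
  have h16a : 1/(16*C) ≤ 1/2 := by
    rw [div_le_div_iff₀ (by positivity) (by norm_num)]; nlinarith
  have ht2n0 : (0:ℝ) ≤ (t2:ℝ) := Nat.cast_nonneg t2
  have ht1n0 : (0:ℝ) ≤ (t1:ℝ) := Nat.cast_nonneg t1
  rcases le_total n2 n1 with h21 | h12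
  · -- direction 2 : choose B in V2 of size t2
    have hL21 : L2 ≤ L1 :=
      Real.logb_le_logb_of_le one_lt_two (by positivity) (by exact_mod_cast h21)
    have hθ1 : 1 - 1/(32*C) ≤ 1 := by
      have : (0:ℝ) < 1/(32*C) := by positivity
      linarith
    have htX : (t2:ℝ) ≤ (1 - 1/(32*C)) * n2 := by
      have h1 : (t2:ℝ) ≤ (n2:ℝ)/2 := by nlinarith
      have h2 := mul_le_mul_of_nonneg_right
        (by linarith : (1:ℝ)/2 ≤ 1 - 1/(32*C)) (by linarith : (0:ℝ) ≤ (n2:ℝ))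
      calc (t2:ℝ) ≤ (n2:ℝ)/2 := h1
        _ = 1/2 * n2 := by ring
        _ ≤ (1 - 1/(32*C)) * n2 := h2
    obtain ⟨A, B, hAsub, hAcard, hBsub, hRab, hBbound⟩ :=
      exists_subsets (univ : Finset V2) S (fun v u => R u v) t2 ht2pos
        (1 - 1/(32*C)) hθ1
        (by rw [Finset.card_univ, ← hn2]; exact htX)
        (by
          intro u hu
          rw [Finset.card_univ, ← hn2]
          exact hdeg u hu)
    rw [Finset.card_univ, ← hn2] at hBbound
    refine ⟨B, A, ?_, ?_, fun a ha b hb => hRab b hb a ha⟩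
    · -- C * L1 ≤ B.card
      have hbase : 1 - 1/(16*C) ≤ 1 - 1/(32*C) - (t2:ℝ)/n2 := by
        have ht2n2 : (t2:ℝ)/n2 ≤ 1/(96*C) := by
          rw [div_le_div_iff₀ (by linarith) (by positivity)]
          nlinarith
        have : 1/(32*C) + 1/(96*C) ≤ 1/(16*C) := by
          rw [div_add_div _ _ (by positivity) (by positivity), div_le_div_iff₀ (by positivity) (by positivity)]
          ring_nf
          nlinarith
        linarith
      have hx2 : 1/(16*C) ≤ 1/2 := by
        rw [div_le_div_iff₀ (by positivity) (by norm_num)]; nlinarith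
      have hexp : Real.exp (-(2*(1/(16*C))*t2)) ≤ (1 - 1/(32*C) - (t2:ℝ)/n2)^t2 :=
        base_pow_ge (by positivity) hx2 t2 hbase
      have hexp2 : Real.exp (-L1/8 - 1/8) ≤ Real.exp (-(2*(1/(16*C))*t2)) := by
        apply Real.exp_le_exp.mpr
        have : 2*(1/(16*C))*(t2:ℝ) = (t2:ℝ)/(8*C) := by field_simp; ring
        rw [this]
        have h1 : (t2:ℝ) ≤ C * L1 + 1 := by nlinarith
        have h2 : (t2:ℝ)/(8*C) ≤ L1/8 + 1/8 := by
          rw [div_le_iff₀ (by positivity)]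
          nlinarith
        linarith
      have hcomb : C * L1 ≤ (S.card : ℝ) * (1 - 1/(32*C) - (t2:ℝ)/n2)^t2 := by
        calc C * L1 ≤ ((n1:ℝ)/6) * Real.exp (-L1/8 - 1/8) := he1
          _ ≤ (S.card : ℝ) * (1 - 1/(32*C) - (t2:ℝ)/n2)^t2 := by
              apply mul_le_mul hS (le_trans hexp2 hexp) (Real.exp_pos _).le hs0.le
      exact le_trans hcomb hBbound
    · rw [hAcard]; exact ht2ge
  · -- direction 1 : Markov + choose A in S of size t1
    have hL12 : L1 ≤ L2 :=
      Real.logb_le_logb_of_le one_lt_two (by positivity) (by exact_mod_cast h12)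
    have hswap : ∑ y ∈ (univ : Finset V2), ((S.filter (fun x => ¬ R x y)).card)
        = ∑ x ∈ S, (((univ : Finset V2).filter (fun y => ¬ R x y)).card) := by
      simp only [Finset.card_filter]
      exact Finset.sum_comm
    have hper : ∀ x ∈ S, (((univ : Finset V2).filter (fun y => ¬ R x y)).card : ℝ)
        ≤ (n2:ℝ)/(32*C) := by
      intro x hx
      have hsplit : ((univ : Finset V2).filter (fun y => R x y)).card
          + ((univ : Finset V2).filter (fun y => ¬ R x y)).card = n2 := by
        rw [Finset.card_filter_add_card_filter_not, Finset.card_univ]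
      have hsplit' : (((univ : Finset V2).filter (fun y => R x y)).card : ℝ)
          + (((univ : Finset V2).filter (fun y => ¬ R x y)).card : ℝ) = (n2:ℝ) := by
        exact_mod_cast congrArg (Nat.cast : ℕ → ℝ) hsplit
      have hd := hdeg x hx
      have hring : (n2:ℝ) - (1 - 1/(32*C)) * n2 = (n2:ℝ)/(32*C) := by ring
      linarith
    have hsumR : ∑ y ∈ (univ : Finset V2), ((S.filter (fun x => ¬ R x y)).card : ℝ)
        ≤ (S.card : ℝ) * ((n2:ℝ)/(32*C)) := by
      rw [← Nat.cast_sum, hswap, Nat.cast_sum]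
      calc ∑ x ∈ S, (((univ : Finset V2).filter (fun y => ¬ R x y)).card : ℝ)
          ≤ ∑ _x ∈ S, (n2:ℝ)/(32*C) := Finset.sum_le_sum hper
        _ = (S.card : ℝ) * ((n2:ℝ)/(32*C)) := by rw [Finset.sum_const, nsmul_eq_mul]
    set Yset := (univ : Finset V2).filter
      (fun y => ((S.filter (fun x => ¬ R x y)).card : ℝ) < (S.card:ℝ)/(16*C)) with hYset
    set Z := (univ : Finset V2).filter
      (fun y => ¬ (((S.filter (fun x => ¬ R x y)).card : ℝ) < (S.card:ℝ)/(16*C))) with hZdef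
    have hYZ : Yset.card + Z.card = n2 := by
      rw [hYset, hZdef, Finset.card_filter_add_card_filter_not, Finset.card_univ]
    have hZbound : (Z.card : ℝ) * ((S.card:ℝ)/(16*C)) ≤ (S.card : ℝ) * ((n2:ℝ)/(32*C)) := by
      calc (Z.card : ℝ) * ((S.card:ℝ)/(16*C))
          = ∑ _y ∈ Z, (S.card:ℝ)/(16*C) := by rw [Finset.sum_const, nsmul_eq_mul]
        _ ≤ ∑ y ∈ Z, ((S.filter (fun x => ¬ R x y)).card : ℝ) := by
            apply Finset.sum_le_sum
            intro y hy
            exact not_lt.mp (Finset.mem_filter.mp hy).2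
        _ ≤ ∑ y ∈ (univ : Finset V2), ((S.filter (fun x => ¬ R x y)).card : ℝ) :=
            Finset.sum_le_sum_of_subset_of_nonneg (Finset.filter_subset _ _)
              (fun y _ _ => Nat.cast_nonneg _)
        _ ≤ (S.card : ℝ) * ((n2:ℝ)/(32*C)) := hsumR
    have hZle : (Z.card : ℝ) ≤ (n2:ℝ)/2 := by
      have h2 := mul_le_mul_of_nonneg_right hZbound (by positivity : (0:ℝ) ≤ 32*C)
      have e1 : (Z.card : ℝ) * ((S.card:ℝ)/(16*C)) * (32*C)
          = (Z.card:ℝ) * (2*S.card) := by field_simp; ring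
      have e2 : (S.card : ℝ) * ((n2:ℝ)/(32*C)) * (32*C) = (S.card:ℝ) * n2 := by
        field_simp
      rw [e1, e2] at h2
      nlinarith
    have hYge : (n2:ℝ)/2 ≤ Yset.card := by
      have hc : (Yset.card : ℝ) + (Z.card : ℝ) = (n2:ℝ) := by
        exact_mod_cast congrArg (Nat.cast : ℕ → ℝ) hYZ
      linarith
    have hθ1 : 1 - 1/(16*C) ≤ 1 := by
      have : (0:ℝ) < 1/(16*C) := by positivity
      linarith
    have h16t1 : (t1:ℝ) ≤ (S.card:ℝ)/(16*C) := by
      rw [le_div_iff₀ (by positivity)]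
      nlinarith
    have htX : (t1:ℝ) ≤ (1 - 1/(16*C)) * S.card := by
      have h1 : (t1:ℝ) ≤ (S.card:ℝ)/2 := by
        have : (S.card:ℝ)/(16*C) ≤ (S.card:ℝ)/2 := by
          rw [div_le_div_iff₀ (by positivity) (by norm_num)]
          nlinarith
        linarith
      have h2 := mul_le_mul_of_nonneg_right
        (by linarith : (1:ℝ)/2 ≤ 1 - 1/(16*C)) (by linarith : (0:ℝ) ≤ (S.card:ℝ))
      calc (t1:ℝ) ≤ (S.card:ℝ)/2 := h1
        _ = 1/2 * S.card := by ring
        _ ≤ (1 - 1/(16*C)) * S.card := h2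
    have hfib : ∀ y ∈ Yset, (1 - 1/(16*C)) * (S.card:ℝ)
        ≤ ((S.filter (fun x => R x y)).card : ℝ) := by
      intro y hy
      have hlt := (Finset.mem_filter.mp hy).2
      have hsplit : (S.filter (fun x => R x y)).card
          + (S.filter (fun x => ¬ R x y)).card = S.card :=
        Finset.card_filter_add_card_filter_not _
      have hsplit' : ((S.filter (fun x => R x y)).card : ℝ)
          + ((S.filter (fun x => ¬ R x y)).card : ℝ) = (S.card:ℝ) := by
        exact_mod_cast congrArg (Nat.cast : ℕ → ℝ) hsplit
      have hring : (S.card:ℝ) - (S.card:ℝ)/(16*C) = (1 - 1/(16*C)) * S.card := by ring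
      linarith
    obtain ⟨A, B, hAsub, hAcard, hBsub, hRab, hBbound⟩ :=
      exists_subsets S Yset R t1 ht1pos (1 - 1/(16*C)) hθ1 htX hfib
    refine ⟨A, B, ?_, ?_, hRab⟩
    · rw [hAcard]; exact ht1ge
    · have hbase : 1 - 1/(8*C) ≤ 1 - 1/(16*C) - (t1:ℝ)/S.card := by
        have ht1s : (t1:ℝ)/S.card ≤ 1/(16*C) := by
          rw [div_le_div_iff₀ hs0 (by positivity)]
          rw [le_div_iff₀ (by positivity)] at h16t1
          linarith
        have he : (1:ℝ)/(16*C) + 1/(16*C) = 1/(8*C) := by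
          field_simp
          ring
        linarith
      have h8a : 1/(8*C) ≤ 1/2 := by
        rw [div_le_div_iff₀ (by positivity) (by norm_num)]; nlinarith
      have hexp : Real.exp (-(2*(1/(8*C))*t1)) ≤ (1 - 1/(16*C) - (t1:ℝ)/S.card)^t1 :=
        base_pow_ge (by positivity) h8a t1 hbase
      have hexp2 : Real.exp (-L2/4 - 1/4) ≤ Real.exp (-(2*(1/(8*C))*t1)) := by
        apply Real.exp_le_exp.mpr
        have he : 2*(1/(8*C))*(t1:ℝ) = (t1:ℝ)/(4*C) := by field_simp; ring
        rw [he]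
        have h1 : (t1:ℝ) ≤ C * L2 + 1 := by nlinarith
        have h2 : (t1:ℝ)/(4*C) ≤ L2/4 + 1/4 := by
          rw [div_le_iff₀ (by positivity)]
          nlinarith
        linarith
      have hcomb : C * L2 ≤ (Yset.card : ℝ) * (1 - 1/(16*C) - (t1:ℝ)/S.card)^t1 := by
        calc C * L2 ≤ ((n2:ℝ)/2) * Real.exp (-L2/4 - 1/4) := hd2
          _ ≤ (Yset.card : ℝ) * (1 - 1/(16*C) - (t1:ℝ)/S.card)^t1 := by
              apply mul_le_mul hYge (le_trans hexp2 hexp) (Real.exp_pos _).le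
                (Nat.cast_nonneg _)
      exact le_trans hcomb hBbound

set_option maxHeartbeats 1000000 in
theorem stmt1 (C : ℝ) (hC : 1 < C) :
    ∃ nC : ℕ, ∀ (V1 V2 : Type) [Fintype V1] [Fintype V2]
      (E : V1 → V2 → Prop) [∀ a b, Decidable (E a b)],
      nC ≤ Fintype.card V1 → nC ≤ Fintype.card V2 →
      BipRamsey E C →
      2 * (Fintype.card V1 : ℝ) / 3 ≤
        ((Finset.univ.filter (fun u : V1 =>
            (Fintype.card V2 : ℝ) / (32 * C) ≤ ((nbr E u).card : ℝ) ∧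
            ((nbr E u).card : ℝ) ≤ (1 - 1 / (32 * C)) * Fintype.card V2)).card : ℝ) := by
  classical
  obtain ⟨N, hN⟩ := cond_eventually C hC
  refine ⟨N, ?_⟩
  intro V1 V2 _ _ E _ h1 h2 hRam
  by_contra hlt
  push_neg at hlt
  set n1 := Fintype.card V1 with hn1
  set n2 := Fintype.card V2 with hn2
  have hC0 : (0:ℝ) < C := by linarith
  have hc1 := hN n1 h1
  have hc2 := hN n2 h2
  have hn1R : (2:ℝ) ≤ (n1:ℝ) := by exact_mod_cast hc1.1
  set G := Finset.univ.filter (fun u : V1 =>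
      (n2 : ℝ) / (32 * C) ≤ ((nbr E u).card : ℝ) ∧
      ((nbr E u).card : ℝ) ≤ (1 - 1 / (32 * C)) * n2) with hG
  set low := Finset.univ.filter
      (fun u : V1 => ((nbr E u).card : ℝ) < (n2:ℝ)/(32*C)) with hlow
  set high := Finset.univ.filter
      (fun u : V1 => (1 - 1/(32*C)) * (n2:ℝ) < ((nbr E u).card : ℝ)) with hhigh
  have hsub : Finset.univ \ G ⊆ low ∪ high := by
    intro u hu
    rw [Finset.mem_sdiff] at hu
    have hu2 := hu.2
    rw [hG, Finset.mem_filter] at hu2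
    push_neg at hu2
    rw [Finset.mem_union, hlow, hhigh, Finset.mem_filter, Finset.mem_filter]
    rcases lt_or_ge ((nbr E u).card : ℝ) ((n2:ℝ)/(32*C)) with h | h
    · exact Or.inl ⟨Finset.mem_univ u, h⟩
    · exact Or.inr ⟨Finset.mem_univ u, hu2 (Finset.mem_univ u) h⟩
  have hGcard : (G.card : ℝ) ≤ (n1:ℝ) := by
    exact_mod_cast Finset.card_le_card (Finset.subset_univ G) |>.trans
      (le_of_eq (Finset.card_univ))
  have hsdiff : ((Finset.univ \ G).card : ℝ) = (n1:ℝ) - G.card := by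
    rw [Finset.card_sdiff_of_subset (Finset.subset_univ G), Finset.card_univ, ← hn1]
    have : G.card ≤ n1 := by exact_mod_cast hGcard
    push_cast [Nat.cast_sub this]
    ring
  have hbad : (n1:ℝ)/3 ≤ ((low ∪ high).card : ℝ) := by
    have h3 : ((Finset.univ \ G).card : ℝ) ≤ ((low ∪ high).card : ℝ) := by
      exact_mod_cast Finset.card_le_card hsub
    linarith
  have hunion : ((low ∪ high).card : ℝ) ≤ (low.card : ℝ) + high.card := by
    exact_mod_cast Finset.card_union_le low high
  have hone : (n1:ℝ)/6 ≤ low.card ∨ (n1:ℝ)/6 ≤ high.card := by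
    by_contra hcon
    push_neg at hcon
    linarith [hcon.1, hcon.2]
  rcases hone with hS | hS
  · -- many low degree vertices : use non-adjacency
    have hdeg : ∀ x ∈ low, (1 - 1/(32*C)) * (n2 : ℝ)
        ≤ (((Finset.univ : Finset V2).filter (fun y => ¬ E x y)).card : ℝ) := by
      intro x hx
      have hxlt := (Finset.mem_filter.mp hx).2
      have hsplit : ((Finset.univ : Finset V2).filter (fun y => E x y)).card
          + ((Finset.univ : Finset V2).filter (fun y => ¬ E x y)).card = n2 := by
        rw [Finset.card_filter_add_card_filter_not, Finset.card_univ]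
      have hsplit' : (((Finset.univ : Finset V2).filter (fun y => E x y)).card : ℝ)
          + (((Finset.univ : Finset V2).filter (fun y => ¬ E x y)).card : ℝ) = (n2:ℝ) := by
        exact_mod_cast congrArg (Nat.cast : ℕ → ℝ) hsplit
      have heq : ((nbr E x).card : ℝ)
          = (((Finset.univ : Finset V2).filter (fun y => E x y)).card : ℝ) := rfl
      have hring : (n2:ℝ) - (n2:ℝ)/(32*C) = (1 - 1/(32*C)) * n2 := by ring
      rw [heq] at hxlt
      linarith
    obtain ⟨A, B, hA, hB, hAB⟩ :=
      core C hC (fun u v => ¬ E u v) hc1 hc2 low hS hdeg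
    exact hRam A B hA hB (Or.inr hAB)
  · -- many high degree vertices : use adjacency
    have hdeg : ∀ x ∈ high, (1 - 1/(32*C)) * (n2 : ℝ)
        ≤ (((Finset.univ : Finset V2).filter (fun y => E x y)).card : ℝ) := by
      intro x hx
      have hxlt := (Finset.mem_filter.mp hx).2
      have heq : ((nbr E x).card : ℝ)
          = (((Finset.univ : Finset V2).filter (fun y => E x y)).card : ℝ) := rfl
      rw [heq] at hxlt
      linarith
    obtain ⟨A, B, hA, hB, hAB⟩ :=
      core C hC (fun u v => E u v) hc1 hc2 high hS hdeg
    exact hRam A B hA hB (Or.inl hAB)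
end

section
/- For every δ > 0 there exists c(δ) such that the following holds. Let G = (V1, V2, E) be a bipartite graph and let (x₁,y₁) and (x₂,y₂) be two ordered pairs of vertices of V1 with d(x₁) ≥ d(y₁), such that |(N(x₁)\N(y₁)) \ N(x₂)| ≥ δ|V2| and |(N(x₁)\N(y₁)) \ N(y₂)| ≥ δ|V2|. If W is a uniformly random subset of V2, then P(d^W(x₁) − d^W(y₁) = d^W(x₂) − d^W(y₂)) ≤ c(δ)·|V2|^{−1/2}. -/
open Finset

lemma central_sqrt (k : ℕ) :
    (Nat.centralBinom k : ℝ) * Real.sqrt (3 * k + 1) ≤ 4 ^ k := by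
  induction k with
  | zero => simp [Nat.centralBinom]
  | succ k ih =>
    have hrec : ((k : ℝ) + 1) * Nat.centralBinom (k + 1)
        = 2 * (2 * k + 1) * Nat.centralBinom k := by
      exact_mod_cast Nat.succ_mul_centralBinom_succ k
    have hkpos : (0 : ℝ) < (k : ℝ) + 1 := by positivity
    rw [← mul_le_mul_iff_right₀ hkpos]
    have hkey : (2 * (2 * (k : ℝ) + 1)) * Real.sqrt (3 * (k + 1 : ℕ) + 1)
        ≤ (4 * ((k : ℝ) + 1)) * Real.sqrt (3 * k + 1) := by
      have h1 : (2 * (2 * (k : ℝ) + 1)) * Real.sqrt (3 * (k + 1 : ℕ) + 1)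
          = Real.sqrt ((2 * (2 * (k : ℝ) + 1)) ^ 2 * (3 * (k + 1 : ℕ) + 1)) := by
        rw [Real.sqrt_mul (by positivity), Real.sqrt_sq (by positivity)]
      have h2 : (4 * ((k : ℝ) + 1)) * Real.sqrt (3 * k + 1)
          = Real.sqrt ((4 * ((k : ℝ) + 1)) ^ 2 * (3 * k + 1)) := by
        rw [Real.sqrt_mul (by positivity), Real.sqrt_sq (by positivity)]
      rw [h1, h2]
      apply Real.sqrt_le_sqrt
      push_cast
      nlinarith [Nat.cast_nonneg (α := ℝ) k]
    calc ((k : ℝ) + 1) * ((Nat.centralBinom (k + 1) : ℝ) * Real.sqrt (3 * (k + 1 : ℕ) + 1))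
        = (2 * (2 * (k : ℝ) + 1) * Nat.centralBinom k) * Real.sqrt (3 * (k + 1 : ℕ) + 1) := by
          rw [← mul_assoc, hrec]
      _ = (Nat.centralBinom k : ℝ) * ((2 * (2 * (k : ℝ) + 1)) * Real.sqrt (3 * (k + 1 : ℕ) + 1)) := by
          ring
      _ ≤ (Nat.centralBinom k : ℝ) * ((4 * ((k : ℝ) + 1)) * Real.sqrt (3 * k + 1)) := by
          apply mul_le_mul_of_nonneg_left hkey (by positivity)
      _ = (4 * ((k : ℝ) + 1)) * ((Nat.centralBinom k : ℝ) * Real.sqrt (3 * k + 1)) := by ring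
      _ ≤ (4 * ((k : ℝ) + 1)) * 4 ^ k := by
          apply mul_le_mul_of_nonneg_left ih (by positivity)
      _ = ((k : ℝ) + 1) * 4 ^ (k + 1) := by ring

lemma choose_half_sqrt (m : ℕ) :
    (m.choose (m / 2) : ℝ) * Real.sqrt (m + 1) ≤ 2 ^ m := by
  rcases Nat.even_or_odd m with ⟨k, hk⟩ | ⟨k, hk⟩
  · subst hk
    have hdiv : (k + k) / 2 = k := by omega
    have hc : (k + k).choose k = Nat.centralBinom k := by
      rw [Nat.centralBinom, two_mul]
    rw [hdiv, hc]
    have hsq : Real.sqrt ((k : ℝ) + k + 1) ≤ Real.sqrt (3 * k + 1) := by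
      apply Real.sqrt_le_sqrt; linarith [Nat.cast_nonneg (α := ℝ) k]
    calc (Nat.centralBinom k : ℝ) * Real.sqrt (((k + k : ℕ) : ℝ) + 1)
        ≤ (Nat.centralBinom k : ℝ) * Real.sqrt (3 * k + 1) := by
          apply mul_le_mul_of_nonneg_left _ (by positivity)
          apply Real.sqrt_le_sqrt; push_cast; linarith [Nat.cast_nonneg (α := ℝ) k]
      _ ≤ 4 ^ k := central_sqrt k
      _ = 2 ^ (k + k) := by
          rw [show (4 : ℝ) = 2 ^ 2 by norm_num, ← pow_mul]
          congr 1; ring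
  · subst hk
    have hdiv : (2 * k + 1) / 2 = k := by omega
    have hc : 2 * ((2 * k + 1).choose k) = Nat.centralBinom (k + 1) := by
      rw [Nat.centralBinom]
      have h2 : 2 * (k + 1) = (2 * k + 1) + 1 := by ring
      rw [h2, Nat.choose_succ_succ, Nat.choose_symm_half, two_mul]
    have hcR : ((2 * k + 1).choose k : ℝ) = (Nat.centralBinom (k + 1) : ℝ) / 2 := by
      have hc' : (2 : ℝ) * ((2 * k + 1).choose k : ℝ) = (Nat.centralBinom (k + 1) : ℝ) := by
        exact_mod_cast hc
      linarith
    rw [hdiv, hcR]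
    have hsq : Real.sqrt ((2 * k + 1 : ℕ) + 1) ≤ Real.sqrt (3 * (k + 1 : ℕ) + 1) := by
      apply Real.sqrt_le_sqrt; push_cast; linarith [Nat.cast_nonneg (α := ℝ) k]
    calc (Nat.centralBinom (k + 1) : ℝ) / 2 * Real.sqrt ((2 * k + 1 : ℕ) + 1)
        ≤ (Nat.centralBinom (k + 1) : ℝ) / 2 * Real.sqrt (3 * (k + 1 : ℕ) + 1) := by
          apply mul_le_mul_of_nonneg_left hsq (by positivity)
      _ = ((Nat.centralBinom (k + 1) : ℝ) * Real.sqrt (3 * (k + 1 : ℕ) + 1)) / 2 := by ring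
      _ ≤ 4 ^ (k + 1) / 2 := by linarith [central_sqrt (k + 1)]
      _ = 2 ^ (2 * k + 1) := by
          rw [show (4 : ℝ) = 2 ^ 2 by norm_num, ← pow_mul]
          rw [show 2 * (k + 1) = (2 * k + 1) + 1 by ring, pow_succ]
          ring

theorem stmt10 (δ : ℝ) (hδ : 0 < δ) :
    ∃ c : ℝ, ∀ (V1 V2 : Type) [Fintype V1] [Fintype V2] [DecidableEq V2] [Nonempty V2]
      (E : V1 → V2 → Prop) [∀ a b, Decidable (E a b)] (x₁ y₁ x₂ y₂ : V1),
      (nbr E y₁).card ≤ (nbr E x₁).card →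
      δ * Fintype.card V2 ≤ ((((nbr E x₁ \ nbr E y₁) \ nbr E x₂).card : ℝ)) →
      δ * Fintype.card V2 ≤ ((((nbr E x₁ \ nbr E y₁) \ nbr E y₂).card : ℝ)) →
      (((Finset.univ : Finset (Finset V2)).filter
          (fun W => ((nbr E x₁ ∩ W).card : ℤ) - (nbr E y₁ ∩ W).card =
                    ((nbr E x₂ ∩ W).card : ℤ) - (nbr E y₂ ∩ W).card)).card : ℝ) ≤
        c * (Fintype.card V2 : ℝ) ^ (-(1 : ℝ) / 2) * 2 ^ (Fintype.card V2) := by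
  refine ⟨(Real.sqrt δ)⁻¹, ?_⟩
  intro V1 V2 _ _ _ _ E _ x₁ y₁ x₂ y₂ _hd h1 _h2
  classical
  set n := Fintype.card V2 with hn
  set A : Finset V2 := (nbr E x₁ \ nbr E y₁) \ nbr E x₂ with hA
  set m := A.card with hm
  set 𝒮 : Finset (Finset V2) := (Finset.univ : Finset (Finset V2)).filter
      (fun W => ((nbr E x₁ ∩ W).card : ℤ) - (nbr E y₁ ∩ W).card =
                ((nbr E x₂ ∩ W).card : ℤ) - (nbr E y₂ ∩ W).card) with hS
  -- the signed weight function
  set ε : V2 → ℤ := fun v => ((if v ∈ nbr E x₁ then 1 else 0) - (if v ∈ nbr E y₁ then 1 else 0))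
      - ((if v ∈ nbr E x₂ then 1 else 0) - (if v ∈ nbr E y₂ then 1 else 0)) with hε
  have hcardsum : ∀ u : V1, ∀ W : Finset V2,
      ((nbr E u ∩ W).card : ℤ) = ∑ v ∈ W, (if v ∈ nbr E u then (1 : ℤ) else 0) := by
    intro u W
    rw [Finset.inter_comm, ← Finset.filter_mem_eq_inter, Finset.card_filter]
    push_cast
    simp
  have hzero : ∀ W ∈ 𝒮, ∑ v ∈ W, ε v = 0 := by
    intro W hW
    rw [hS, Finset.mem_filter] at hW
    simp only [hε, Finset.sum_sub_distrib]
    rw [← hcardsum x₁ W, ← hcardsum y₁ W, ← hcardsum x₂ W, ← hcardsum y₂ W]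
    rw [sub_eq_zero]
    exact hW.2
  have hεA : ∀ v ∈ A, 1 ≤ ε v := by
    intro v hv
    rw [hA, Finset.mem_sdiff, Finset.mem_sdiff] at hv
    simp only [hε, if_pos hv.1.1, if_neg hv.1.2, if_neg hv.2]
    split_ifs <;> omega
  -- monotonicity/uniqueness lemma
  have hmono : ∀ W₁ ∈ 𝒮, ∀ W₂ ∈ 𝒮, W₁ \ A = W₂ \ A → W₁ ∩ A ⊆ W₂ ∩ A → W₁ = W₂ := by
    intro W₁ hW₁ W₂ hW₂ hsd hsub
    have hWW : W₁ ⊆ W₂ := by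
      intro v hv
      by_cases hvA : v ∈ A
      · exact Finset.mem_of_mem_inter_left (hsub (Finset.mem_inter.2 ⟨hv, hvA⟩))
      · have : v ∈ W₁ \ A := Finset.mem_sdiff.2 ⟨hv, hvA⟩
        rw [hsd] at this
        exact (Finset.mem_sdiff.1 this).1
    have hdsub : W₂ \ W₁ ⊆ A := by
      intro v hv
      rw [Finset.mem_sdiff] at hv
      by_contra hvA
      have : v ∈ W₂ \ A := Finset.mem_sdiff.2 ⟨hv.1, hvA⟩
      rw [← hsd] at this
      exact hv.2 (Finset.mem_sdiff.1 this).1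
    have hsum0 : ∑ v ∈ W₂ \ W₁, ε v = 0 := by
      have := Finset.sum_sdiff (f := ε) hWW
      rw [hzero W₁ hW₁, hzero W₂ hW₂, add_zero] at this
      exact this
    have hcard0 : ((W₂ \ W₁).card : ℤ) ≤ 0 := by
      calc ((W₂ \ W₁).card : ℤ) = ∑ _v ∈ W₂ \ W₁, (1 : ℤ) := by simp
        _ ≤ ∑ v ∈ W₂ \ W₁, ε v := Finset.sum_le_sum (fun v hv => hεA v (hdsub hv))
        _ = 0 := hsum0
    have : W₂ \ W₁ = ∅ := Finset.card_eq_zero.1 (by exact_mod_cast le_antisymm hcard0 (by positivity))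
    exact Finset.Subset.antisymm hWW (Finset.sdiff_eq_empty_iff_subset.1 this)
  -- recovery of a subset of A from its subtype image
  have hrec : ∀ W : Finset V2,
      ((W ∩ A).subtype (· ∈ A)).map (Function.Embedding.subtype _) = W ∩ A := by
    intro W
    rw [Finset.subtype_map]
    exact Finset.filter_true_of_mem (fun x hx => (Finset.mem_inter.1 hx).2)
  -- each fiber is an antichain, hence small by Sperner
  have fiber_bound : ∀ T : Finset V2,
      (𝒮.filter fun W => W \ A = T).card ≤ m.choose (m / 2) := by
    intro T
    set f : Finset V2 → Finset {v // v ∈ A} := fun W => (W ∩ A).subtype (· ∈ A) with hf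
    have hinj : Set.InjOn f (𝒮.filter fun W => W \ A = T) := by
      intro W₁ h₁ W₂ h₂ heq
      simp only [Finset.coe_filter, Set.mem_setOf_eq] at h₁ h₂
      have hint : W₁ ∩ A = W₂ ∩ A := by
        rw [← hrec W₁, ← hrec W₂]
        exact congrArg _ heq
      calc W₁ = W₁ \ A ∪ W₁ ∩ A := (Finset.sdiff_union_inter W₁ A).symm
        _ = W₂ \ A ∪ W₂ ∩ A := by rw [h₁.2, h₂.2, hint]
        _ = W₂ := Finset.sdiff_union_inter W₂ A
    have hanti : IsAntichain (· ⊆ ·)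
        (((𝒮.filter fun W => W \ A = T).image f : Finset (Finset {v // v ∈ A})) :
          Set (Finset {v // v ∈ A})) := by
      intro S₁ hS₁ S₂ hS₂ hne hsub
      rw [Finset.mem_coe, Finset.mem_image] at hS₁ hS₂
      obtain ⟨W₁, hW₁, rfl⟩ := hS₁
      obtain ⟨W₂, hW₂, rfl⟩ := hS₂
      simp only [Finset.mem_filter] at hW₁ hW₂
      have hsub' : W₁ ∩ A ⊆ W₂ ∩ A := by
        rw [← hrec W₁, ← hrec W₂]
        exact Finset.map_subset_map.2 hsub
      exact hne (congrArg f (hmono W₁ hW₁.1 W₂ hW₂.1 (hW₁.2.trans hW₂.2.symm) hsub'))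
    calc (𝒮.filter fun W => W \ A = T).card
        = ((𝒮.filter fun W => W \ A = T).image f).card :=
          (Finset.card_image_of_injOn hinj).symm
      _ ≤ (Fintype.card {v // v ∈ A}).choose (Fintype.card {v // v ∈ A} / 2) :=
          IsAntichain.sperner hanti
      _ = m.choose (m / 2) := by rw [Fintype.card_coe]
  -- fiberwise count
  have hsplit : 𝒮.card = ∑ T ∈ ((Finset.univ : Finset V2) \ A).powerset,
      (𝒮.filter fun W => W \ A = T).card := by
    apply Finset.card_eq_sum_card_fiberwise
    intro W _
    exact Finset.mem_powerset.2 (Finset.sdiff_subset_sdiff (Finset.subset_univ W) le_rfl)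
  have hmn : m ≤ n := by
    rw [hm, hn, ← Finset.card_univ]
    exact Finset.card_le_card (Finset.subset_univ A)
  have hcount : 𝒮.card ≤ 2 ^ (n - m) * m.choose (m / 2) := by
    rw [hsplit]
    calc ∑ T ∈ ((Finset.univ : Finset V2) \ A).powerset, (𝒮.filter fun W => W \ A = T).card
        ≤ ∑ _T ∈ ((Finset.univ : Finset V2) \ A).powerset, m.choose (m / 2) :=
          Finset.sum_le_sum (fun T _ => fiber_bound T)
      _ = ((Finset.univ : Finset V2) \ A).powerset.card * m.choose (m / 2) := by
          rw [Finset.sum_const, smul_eq_mul]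
      _ = 2 ^ (n - m) * m.choose (m / 2) := by
          rw [Finset.card_powerset, Finset.card_sdiff_of_subset (Finset.subset_univ A),
            Finset.card_univ]
  -- pass to the reals
  have hn1 : (1 : ℝ) ≤ n := by exact_mod_cast Fintype.card_pos
  have hδn : (0 : ℝ) < δ * n := by positivity
  have hδnm : δ * n ≤ (m : ℝ) := h1
  have hsqpos : (0 : ℝ) < Real.sqrt ((m : ℝ) + 1) :=
    Real.sqrt_pos.mpr (by linarith [Nat.cast_nonneg (α := ℝ) m])
  have hchoose : (m.choose (m / 2) : ℝ) ≤ 2 ^ m / Real.sqrt ((m : ℝ) + 1) := by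
    rw [le_div_iff₀ hsqpos]
    exact choose_half_sqrt m
  have hrpow : ((n : ℝ)) ^ (-(1 : ℝ) / 2) = (Real.sqrt n)⁻¹ := by
    rw [neg_div, Real.rpow_neg (Nat.cast_nonneg n), Real.sqrt_eq_rpow]
  calc (𝒮.card : ℝ) ≤ (2 : ℝ) ^ (n - m) * (m.choose (m / 2) : ℝ) := by exact_mod_cast hcount
    _ ≤ (2 : ℝ) ^ (n - m) * (2 ^ m / Real.sqrt ((m : ℝ) + 1)) := by
        apply mul_le_mul_of_nonneg_left hchoose (by positivity)
    _ = (2 : ℝ) ^ n / Real.sqrt ((m : ℝ) + 1) := by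
        rw [← mul_div_assoc, ← pow_add, Nat.sub_add_cancel hmn]
    _ ≤ (2 : ℝ) ^ n / Real.sqrt (δ * n) := by
        apply div_le_div_of_nonneg_left (by positivity) (by positivity)
        apply Real.sqrt_le_sqrt
        linarith
    _ = (Real.sqrt δ)⁻¹ * (n : ℝ) ^ (-(1 : ℝ) / 2) * 2 ^ n := by
        rw [hrpow, Real.sqrt_mul hδ.le]
        have h1' : Real.sqrt δ ≠ 0 := by positivity
        have h2' : Real.sqrt (n : ℝ) ≠ 0 := by positivity
        field_simp
end
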